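/- Consider a FIFO system with cumulative input I and cumulative output O (both wide-sense increasing functions from [0,∞) to [0,∞) with O ≤ I) that offers a service curve β, meaning: for every t ≥ 0 there exists s ∈ [0,t] with O(t) ≥ I(s) + β(t−s), where β is wide-sense increasing with β(0) = 0. Suppose packets arrive at times A_1 ≤ A_2 ≤ ... with lengths l_1, l_2, ... > 0 (packetized input: I(t) = Σ_{i : A_i < t} l_i), and packet n starts transmission at time Q_n ≥ A_n with O(Q_n) = Σ_{i=1}^{n−1} l_i. Then there exists an index m ≤ n such that β(Q_n − A_m) ≤ Σ_{k=m}^{n−1} l_k. -/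

import Mathlib

/-- In a FIFO system with monotone cumulative input `I` and output `O`
(`O ≤ I`) offering service curve `β` (monotone, `β 0 = 0`), with packetized input
(finitely many packets, indexed `0, …, N−1` in order of nondecreasing arrival times
`A i ≥ 0`, positive lengths `l i`, `I t = Σ_{i : A i < t} l i`), if packet `n` starts
transmission at `Q n ≥ A n` with `O (Q n) = Σ_{i<n} l i`, then there exists `m ≤ n`
with `β (Q n − A m) ≤ Σ_{k=m}^{n−1} l k`. -/
theorem stmt4 (N : ℕ) (A l Q : ℕ → ℝ) (I O : ℝ → ℝ) (β : ℝ → ℝ)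
    (hImono : MonotoneOn I (Set.Ici 0)) (hOmono : MonotoneOn O (Set.Ici 0))
    (hOI : ∀ t : ℝ, 0 ≤ t → O t ≤ I t)
    (hβmono : MonotoneOn β (Set.Ici 0)) (hβ0 : β 0 = 0)
    (hβnn : ∀ t : ℝ, 0 ≤ t → 0 ≤ β t)
    (hAmono : ∀ i j, i ≤ j → A i ≤ A j) (hAnn : ∀ i, 0 ≤ A i)
    (hl : ∀ i, 0 < l i)
    (hI : ∀ t : ℝ, I t = ∑ i ∈ (Finset.range N).filter (fun i => A i < t), l i)
    (hSC : ∀ t : ℝ, 0 ≤ t → ∃ s : ℝ, 0 ≤ s ∧ s ≤ t ∧ I s + β (t - s) ≤ O t)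
    (n : ℕ) (hn : n < N) (hQ : A n ≤ Q n)
    (hO : O (Q n) = ∑ i ∈ Finset.range n, l i) :
    ∃ m : ℕ, m ≤ n ∧ β (Q n - A m) ≤ ∑ k ∈ Finset.Ico m n, l k := by
  have hQnn : (0:ℝ) ≤ Q n := le_trans (hAnn n) hQ
  obtain ⟨s, hs0, hsQ, hsc⟩ := hSC (Q n) hQnn
  by_cases h : ∃ m, m ≤ n ∧ s ≤ A m
  · have hex : ∃ m, s ≤ A m := ⟨h.choose, h.choose_spec.2⟩
    set m := Nat.find hex with hm
    have hsm : s ≤ A m := Nat.find_spec hex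
    have hmn : m ≤ n := le_trans (Nat.find_min' hex h.choose_spec.2) h.choose_spec.1
    refine ⟨m, hmn, ?_⟩
    have hlt : ∀ i < m, A i < s := fun i hi => lt_of_not_ge (Nat.find_min hex hi)
    have hsub : Finset.range m ⊆ (Finset.range N).filter (fun i => A i < s) := by
      intro i hi
      simp only [Finset.mem_range, Finset.mem_filter] at *
      exact ⟨lt_of_lt_of_le hi (le_trans hmn (le_of_lt hn)), hlt i hi⟩
    have hIs : ∑ i ∈ Finset.range m, l i ≤ I s := by
      rw [hI s]
      exact Finset.sum_le_sum_of_subset_of_nonneg hsub (fun i _ _ => (hl i).le)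
    have hβle : β (Q n - A m) ≤ β (Q n - s) := by
      apply hβmono (by simp [sub_nonneg]; exact le_trans (hAmono m n hmn) hQ)
        (by simp [sub_nonneg]; exact hsQ)
      linarith
    have hsum : ∑ k ∈ Finset.Ico m n, l k
        = ∑ i ∈ Finset.range n, l i - ∑ i ∈ Finset.range m, l i :=
      Finset.sum_Ico_eq_sub _ hmn
    linarith
  · push_neg at h
    exfalso
    have hsub : Finset.range (n+1) ⊆ (Finset.range N).filter (fun i => A i < s) := by
      intro i hi
      simp only [Finset.mem_range, Finset.mem_filter] at *
      exact ⟨lt_of_le_of_lt (Nat.lt_succ_iff.mp hi) hn, h i (Nat.lt_succ_iff.mp hi)⟩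
    have hIs : ∑ i ∈ Finset.range (n+1), l i ≤ I s := by
      rw [hI s]
      exact Finset.sum_le_sum_of_subset_of_nonneg hsub (fun i _ _ => (hl i).le)
    have hβn : 0 ≤ β (Q n - s) := hβnn _ (by linarith)
    have := Finset.sum_range_succ l n
    have := hl n
    linarith
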